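/- Let K be a finite extension of ℚ_p of degree d and let α ∈ K with α not in the ring of integers O_K. Then β = α⁻¹ lies in O_K, and if the characteristic polynomial of β over ℚ_p is a_d x^d + a_{d-1} x^{d-1} + ⋯ + a_1 x + a_0 ∈ ℤ_p[x], then a_d = 1 and a_i ∈ pℤ_p for all i = 0, 1, …, d−1. -/

import Mathlib

open Polynomial Module IntermediateField

section Aux
variable (p : ℕ) [Fact p.Prime]


/-- Compactness bound: if the field norm of `y` has `‖·‖ ≤ 1` then the coordinates of `y`
w.r.t. a fixed basis are bounded. -/
theorem exists_coord_bound (L : Type*) [Field L] [Algebra ℚ_[p] L] [FiniteDimensional ℚ_[p] L] :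
    ∃ C : ℝ, 0 < C ∧ ∀ y : L, ‖Algebra.norm ℚ_[p] y‖ ≤ 1 →
      ∀ i, ‖(Module.finBasis ℚ_[p] L).equivFun y i‖ ≤ C := by
  classical
  set d := finrank ℚ_[p] L with hd
  have hd0 : 0 < d := finrank_pos
  haveI : Nonempty (Fin d) := ⟨⟨0, hd0⟩⟩
  set b : Basis (Fin d) ℚ_[p] L := Module.finBasis ℚ_[p] L with hb
  set T : (Fin d → ℚ_[p]) →ₗ[ℚ_[p]] Matrix (Fin d) (Fin d) ℚ_[p] :=
    (Algebra.leftMulMatrix b).toLinearMap.comp (b.equivFun.symm : (Fin d → ℚ_[p]) →ₗ[ℚ_[p]] L)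
      with hT
  have hTcont : Continuous T := T.continuous_of_finiteDimensional
  set F : (Fin d → ℚ_[p]) → ℚ_[p] := fun v => (T v).det with hF
  have hFcont : Continuous F := hTcont.matrix_det
  have hFnorm : ∀ v : Fin d → ℚ_[p], F v = Algebra.norm ℚ_[p] (b.equivFun.symm v) := by
    intro v
    show (Algebra.leftMulMatrix b (b.equivFun.symm v)).det = _
    rw [Algebra.norm_eq_matrix_det b]
  set S := Metric.sphere (0 : Fin d → ℚ_[p]) 1 with hS
  have hScomp : IsCompact S := isCompact_sphere _ _
  have hSne : S.Nonempty := by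
    refine ⟨fun _ => 1, ?_⟩
    simp [hS, Metric.mem_sphere, dist_zero_right]
  obtain ⟨v₀, hv₀S, hmin⟩ := hScomp.exists_isMinOn hSne (hFcont.norm.continuousOn)
  have hv₀ : v₀ ≠ 0 := by
    intro h
    have h1 := Metric.mem_sphere.mp hv₀S
    rw [h] at h1; simp at h1
  set δ := ‖F v₀‖ with hδ
  have hδ0 : 0 < δ := by
    rw [hδ, norm_pos_iff]
    rw [hFnorm v₀]
    refine Algebra.norm_ne_zero_iff.mpr ?_
    intro h
    exact hv₀ ((LinearEquiv.map_eq_zero_iff _).mp h)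
  refine ⟨max 1 δ⁻¹, lt_max_of_lt_left one_pos, ?_⟩
  intro y hy i
  rcases eq_or_ne y 0 with rfl | hy0
  · simp [le_max_of_le_left (zero_le_one)]
  -- choose the max coordinate
  set v := b.equivFun y with hv
  obtain ⟨i₀, -, hi₀⟩ := Finset.exists_max_image Finset.univ (fun i => ‖v i‖) ⟨i, Finset.mem_univ i⟩
  set c := v i₀ with hc
  have hvne : v ≠ 0 := by
    intro h
    rw [hv] at h
    exact hy0 ((LinearEquiv.map_eq_zero_iff b.equivFun).mp h)
  have hcne : c ≠ 0 := by
    intro h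
    apply hvne
    funext j
    have h1 := hi₀ j (Finset.mem_univ j)
    rw [h, norm_zero] at h1
    simpa using norm_le_zero_iff.mp h1
  set u : Fin d → ℚ_[p] := c⁻¹ • v with hu
  have hu1 : ‖u‖ = 1 := by
    refine le_antisymm ?_ ?_
    · refine (pi_norm_le_iff_of_nonneg zero_le_one).mpr fun j => ?_
      rw [hu]
      simp only [Pi.smul_apply, smul_eq_mul, norm_mul, norm_inv]
      rw [inv_mul_le_iff₀ (norm_pos_iff.mpr (by simpa using hcne)), mul_one]
      exact hi₀ j (Finset.mem_univ j)
    · have h2 : ‖u i₀‖ ≤ ‖u‖ := norm_le_pi_norm u i₀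
      have : ‖u i₀‖ = 1 := by
        rw [hu]; simp only [Pi.smul_apply, smul_eq_mul, norm_mul, norm_inv]
        rw [inv_mul_cancel₀ (by simpa using hcne)]
      linarith
  have huS : u ∈ S := by
    rw [hS, Metric.mem_sphere, dist_zero_right, hu1]
  have hmin' : δ ≤ ‖F u‖ := hmin huS
  -- compute F u vs norm y
  have hyu : y = c • b.equivFun.symm u := by
    rw [← map_smul, hu, smul_smul, mul_inv_cancel₀ hcne, one_smul, hv]
    exact (b.equivFun.symm_apply_apply y).symm
  have hnormy : ‖Algebra.norm ℚ_[p] y‖ = ‖c‖ ^ d * ‖F u‖ := by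
    rw [hyu, Algebra.smul_def, map_mul, Algebra.norm_algebraMap, hFnorm u]
    rw [norm_mul, norm_pow]
  have hcd : ‖c‖ ^ d ≤ δ⁻¹ := by
    rw [hnormy] at hy
    rw [← le_div_iff₀ (lt_of_lt_of_le hδ0 hmin')] at hy
    calc ‖c‖ ^ d ≤ 1 / ‖F u‖ := hy
    _ ≤ δ⁻¹ := by
        rw [one_div]
        exact inv_anti₀ hδ0 hmin'
  have hcC : ‖c‖ ≤ max 1 δ⁻¹ := by
    rcases le_or_gt ‖c‖ 1 with h | h
    · exact le_max_of_le_left h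
    · refine le_max_of_le_right ?_
      calc ‖c‖ ≤ ‖c‖ ^ d := le_self_pow₀ h.le hd0.ne'
      _ ≤ δ⁻¹ := hcd
  exact le_trans (hi₀ i (Finset.mem_univ i)) hcC

theorem isIntegral_of_norm_le_one (L : Type*) [Field L] [Algebra ℚ_[p] L]
    [FiniteDimensional ℚ_[p] L] [Algebra ℤ_[p] L] [IsScalarTower ℤ_[p] ℚ_[p] L]
    (x : L) (hx : ‖Algebra.norm ℚ_[p] x‖ ≤ 1) : IsIntegral ℤ_[p] x := by
  classical
  obtain ⟨C, hC0, hC⟩ := exists_coord_bound p L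
  set d := finrank ℚ_[p] L with hd
  set b : Basis (Fin d) ℚ_[p] L := Module.finBasis ℚ_[p] L with hb
  have hp1 : (1 : ℝ) < (p : ℝ) := by
    exact_mod_cast (Fact.out : p.Prime).one_lt
  obtain ⟨k, hk⟩ := pow_unbounded_of_one_lt C hp1
  have hpk0 : ((p : ℚ_[p]) ^ k) ≠ 0 := by
    apply pow_ne_zero
    exact_mod_cast (Nat.cast_ne_zero (R := ℚ_[p])).mpr (Fact.out : p.Prime).ne_zero
  set W : Submodule ℤ_[p] L :=
    Submodule.span ℤ_[p] (Set.range fun i : Fin d => ((p : ℚ_[p]) ^ k)⁻¹ • b i) with hW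
  have hWfg : W.FG := Submodule.fg_span (Set.finite_range _)
  have hmem : ∀ y : L, ‖Algebra.norm ℚ_[p] y‖ ≤ 1 → y ∈ W := by
    intro y hy
    have hcoord := hC y hy
    have hsum : ∑ i, b.equivFun y i • b i = y := b.sum_equivFun y
    rw [← hsum]
    refine Submodule.sum_mem W fun i _ => ?_
    have hrw : b.equivFun y i • b i
        = ((p : ℚ_[p]) ^ k * b.equivFun y i) • (((p : ℚ_[p]) ^ k)⁻¹ • b i) := by
      rw [smul_smul, mul_comm ((p : ℚ_[p]) ^ k), mul_assoc, mul_inv_cancel₀ hpk0, mul_one]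
    rw [hrw]
    have hnorm : ‖(p : ℚ_[p]) ^ k * b.equivFun y i‖ ≤ 1 := by
      rw [norm_mul, norm_pow, Padic.norm_p]
      calc ((p : ℝ)⁻¹) ^ k * ‖b.equivFun y i‖ ≤ ((p : ℝ)⁻¹) ^ k * C := by
            exact mul_le_mul_of_nonneg_left (hcoord i) (by positivity)
      _ ≤ ((p : ℝ)⁻¹) ^ k * (p : ℝ) ^ k := by
            exact mul_le_mul_of_nonneg_left hk.le (by positivity)
      _ = 1 := by
            rw [← mul_pow, inv_mul_cancel₀ (by positivity), one_pow]
    set a : ℤ_[p] := ⟨(p : ℚ_[p]) ^ k * b.equivFun y i, hnorm⟩ with ha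
    have : (p : ℚ_[p]) ^ k * b.equivFun y i = algebraMap ℤ_[p] ℚ_[p] a := by
      rw [PadicInt.algebraMap_apply]
    rw [this, algebraMap_smul]
    exact Submodule.smul_mem W a (Submodule.subset_span ⟨i, rfl⟩)
  haveI : IsNoetherian ℤ_[p] W := isNoetherian_of_fg_of_noetherian _ hWfg
  have hAle : Subalgebra.toSubmodule (Algebra.adjoin ℤ_[p] {x}) ≤ W := by
    rw [Algebra.adjoin_eq_span]
    refine Submodule.span_le.mpr ?_
    rintro z hz
    rw [SetLike.mem_coe, ← Submonoid.powers_eq_closure] at hz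
    obtain ⟨m, rfl⟩ := hz
    exact hmem _ (by rw [map_pow, norm_pow]; exact pow_le_one₀ (norm_nonneg _) hx)
  have hAfg : (Subalgebra.toSubmodule (Algebra.adjoin ℤ_[p] {x})).FG := by
    have h1 : Submodule.map W.subtype
        ((Subalgebra.toSubmodule (Algebra.adjoin ℤ_[p] {x})).comap W.subtype)
        = Subalgebra.toSubmodule (Algebra.adjoin ℤ_[p] {x}) := by
      rw [Submodule.map_comap_subtype]
      exact inf_eq_right.mpr hAle
    rw [← h1]
    exact Submodule.FG.map _ (IsNoetherian.noetherian _)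
  exact IsIntegral.of_mem_of_fg _ hAfg _ (Algebra.subset_adjoin rfl)


theorem norm_coeff_zero (L : Type*) [Field L] [Algebra ℚ_[p] L] [FiniteDimensional ℚ_[p] L]
    (x : L) : ‖Algebra.norm ℚ_[p] x‖
      = ‖(minpoly ℚ_[p] x).coeff 0‖ ^ (finrank ℚ_[p]⟮x⟯ L) := by
  have hx : IsIntegral ℚ_[p] x := Algebra.IsIntegral.isIntegral x
  rw [Algebra.norm_eq_norm_adjoin ℚ_[p] x, norm_pow]
  congr 1
  have h1 : Algebra.norm ℚ_[p] (IntermediateField.AdjoinSimple.gen ℚ_[p] x)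
      = (-1) ^ (IntermediateField.adjoin.powerBasis hx).dim
        * (minpoly ℚ_[p] (IntermediateField.AdjoinSimple.gen ℚ_[p] x)).coeff 0 :=
    Algebra.PowerBasis.norm_gen_eq_coeff_zero_minpoly (IntermediateField.adjoin.powerBasis hx)
  rw [h1, IntermediateField.minpoly_gen ℚ_[p] x, norm_mul]
  have : ‖((-1 : ℚ_[p]) ^ (IntermediateField.adjoin.powerBasis hx).dim)‖ = 1 := by
    rw [norm_pow, norm_neg, norm_one, one_pow]
  rw [this, one_mul]

theorem norm_le_one_of_isIntegral {L : Type*} [Field L] [Algebra ℚ_[p] L]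
    [FiniteDimensional ℚ_[p] L] [Algebra ℤ_[p] L] [IsScalarTower ℤ_[p] ℚ_[p] L]
    {x : L} (hx : IsIntegral ℤ_[p] x) : ‖Algebra.norm ℚ_[p] x‖ ≤ 1 := by
  rw [norm_coeff_zero p L x]
  refine pow_le_one₀ (norm_nonneg _) ?_
  rw [minpoly.isIntegrallyClosed_eq_field_fractions' ℚ_[p] hx, coeff_map]
  calc ‖algebraMap ℤ_[p] ℚ_[p] ((minpoly ℤ_[p] x).coeff 0)‖
      = ‖(minpoly ℤ_[p] x).coeff 0‖ := by rw [PadicInt.algebraMap_apply]; rfl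
  _ ≤ 1 := PadicInt.norm_le_one _

theorem norm_add_le_max {L : Type*} [Field L] [Algebra ℚ_[p] L]
    [FiniteDimensional ℚ_[p] L] [Algebra ℤ_[p] L] [IsScalarTower ℤ_[p] ℚ_[p] L]
    (x y : L) : ‖Algebra.norm ℚ_[p] (x + y)‖
      ≤ max ‖Algebra.norm ℚ_[p] x‖ ‖Algebra.norm ℚ_[p] y‖ := by
  wlog hxy : ‖Algebra.norm ℚ_[p] y‖ ≤ ‖Algebra.norm ℚ_[p] x‖ generalizing x y
  · rw [add_comm, max_comm]
    exact this y x (le_of_not_ge hxy)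
  rw [max_eq_left hxy]
  rcases eq_or_ne x 0 with rfl | hx0
  · rw [zero_add]
    rw [Algebra.norm_zero, norm_zero] at hxy
    have h0 : Algebra.norm ℚ_[p] y = 0 :=
      norm_eq_zero.mp (le_antisymm hxy (norm_nonneg _))
    rw [h0, norm_zero]
    exact norm_nonneg _
  · have hxN : Algebra.norm ℚ_[p] x ≠ 0 := Algebra.norm_ne_zero_iff.mpr hx0
    have hinv : Algebra.norm ℚ_[p] x * Algebra.norm ℚ_[p] x⁻¹ = 1 := by
      rw [← map_mul, mul_inv_cancel₀ hx0, map_one]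
    have ht : ‖Algebra.norm ℚ_[p] (y * x⁻¹)‖ ≤ 1 := by
      rw [map_mul, norm_mul]
      have hnxinv : ‖Algebra.norm ℚ_[p] x⁻¹‖ = ‖Algebra.norm ℚ_[p] x‖⁻¹ := by
        have h2 := congrArg (fun z => ‖z‖) hinv
        simp only [norm_mul, norm_one] at h2
        exact (inv_eq_of_mul_eq_one_right h2).symm
      rw [hnxinv, mul_inv_le_iff₀ (norm_pos_iff.mpr hxN), one_mul]
      exact hxy
    have hint : IsIntegral ℤ_[p] (1 + y * x⁻¹) :=
      (isIntegral_one).add (isIntegral_of_norm_le_one p L _ ht)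
    have hle : ‖Algebra.norm ℚ_[p] (1 + y * x⁻¹)‖ ≤ 1 := norm_le_one_of_isIntegral p hint
    have hfact : x + y = x * (1 + y * x⁻¹) := by
      field_simp
    rw [hfact, map_mul, norm_mul]
    calc ‖Algebra.norm ℚ_[p] x‖ * ‖Algebra.norm ℚ_[p] (1 + y * x⁻¹)‖
        ≤ ‖Algebra.norm ℚ_[p] x‖ * 1 := by
          exact mul_le_mul_of_nonneg_left hle (norm_nonneg _)
    _ = ‖Algebra.norm ℚ_[p] x‖ := mul_one _

section Multisets
variable {L : Type*} [Field L] [Algebra ℚ_[p] L]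
    [FiniteDimensional ℚ_[p] L] [Algebra ℤ_[p] L] [IsScalarTower ℤ_[p] ℚ_[p] L]

theorem norm_multiset_prod_le_one (t : Multiset L) (h : ∀ z ∈ t, ‖Algebra.norm ℚ_[p] z‖ ≤ 1) :
    ‖Algebra.norm ℚ_[p] t.prod‖ ≤ 1 := by
  induction t using Multiset.induction with
  | empty => simp
  | cons a t ih =>
      rw [Multiset.prod_cons, map_mul, norm_mul]
      exact mul_le_one₀ (h a (Multiset.mem_cons_self a t)) (norm_nonneg _)
        (ih fun z hz => h z (Multiset.mem_cons_of_mem hz))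

theorem norm_multiset_prod_lt_one (t : Multiset L) (ht : t ≠ 0)
    (h : ∀ z ∈ t, ‖Algebra.norm ℚ_[p] z‖ < 1) :
    ‖Algebra.norm ℚ_[p] t.prod‖ < 1 := by
  obtain ⟨a, ha⟩ := Multiset.exists_mem_of_ne_zero ht
  obtain ⟨t', rfl⟩ := Multiset.exists_cons_of_mem ha
  rw [Multiset.prod_cons, map_mul, norm_mul]
  calc ‖Algebra.norm ℚ_[p] a‖ * ‖Algebra.norm ℚ_[p] t'.prod‖
      ≤ ‖Algebra.norm ℚ_[p] a‖ * 1 := by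
        refine mul_le_mul_of_nonneg_left ?_ (norm_nonneg _)
        exact norm_multiset_prod_le_one p t' fun z hz =>
          (h z (Multiset.mem_cons_of_mem hz)).le
  _ = ‖Algebra.norm ℚ_[p] a‖ := mul_one _
  _ < 1 := h a (Multiset.mem_cons_self a t')

theorem norm_multiset_sum_lt_one (t : Multiset L) (h : ∀ z ∈ t, ‖Algebra.norm ℚ_[p] z‖ < 1) :
    ‖Algebra.norm ℚ_[p] t.sum‖ < 1 := by
  induction t using Multiset.induction with
  | empty =>
      simp only [Multiset.sum_zero]
      rw [Algebra.norm_zero, norm_zero]; exact one_pos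
  | cons a t ih =>
      rw [Multiset.sum_cons]
      refine lt_of_le_of_lt (norm_add_le_max p a t.sum) ?_
      exact max_lt (h a (Multiset.mem_cons_self a t))
        (ih fun z hz => h z (Multiset.mem_cons_of_mem hz))

end Multisets

/-- Coefficients of the `ℤ_p`-minimal polynomial of an integral element with small norm
are all divisible by `p` (except the leading one). -/
theorem minpoly_coeff_small {K : Type*} [Field K] [Algebra ℚ_[p] K]
    [FiniteDimensional ℚ_[p] K] [Algebra ℤ_[p] K] [IsScalarTower ℤ_[p] ℚ_[p] K]
    (β : K) (hβ : IsIntegral ℤ_[p] β) (hν : ‖Algebra.norm ℚ_[p] β‖ < 1) :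
    ∀ i < (minpoly ℚ_[p] β).natDegree, ‖(minpoly ℚ_[p] β).coeff i‖ < 1 := by
  classical
  set g : ℚ_[p][X] := minpoly ℚ_[p] β with hg
  have hβQ : IsIntegral ℚ_[p] β := Algebra.IsIntegral.isIntegral β
  have hgmonic : g.Monic := minpoly.monic hβQ
  -- the constant coefficient of `g` is small
  have hb0 : ‖g.coeff 0‖ < 1 := by
    have h1 := norm_coeff_zero p K β
    rw [← hg] at h1
    by_contra hc
    push_neg at hc
    rw [h1] at hν
    exact absurd hν (not_lt.mpr (one_le_pow₀ hc))
  -- pass to the splitting field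
  set L := g.SplittingField with hL
  have hsplits : Splits (g.map (algebraMap ℚ_[p] L)) := SplittingField.splits g
  set gL : L[X] := g.map (algebraMap ℚ_[p] L) with hgL
  have hgLmonic : gL.Monic := hgmonic.map _
  have hcard : Multiset.card gL.roots = gL.natDegree :=
    (splits_iff_card_roots.mp hsplits)
  -- every root is a conjugate of β : integral with small norm
  have hroot : ∀ r ∈ gL.roots, ‖Algebra.norm ℚ_[p] r‖ < 1 := by
    intro r hr
    have hr0 : eval r gL = 0 := (mem_roots'.mp hr).2
    have haev : aeval r g = 0 := by rwa [aeval_def, ← eval_map]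
    have hirr : Irreducible g := minpoly.irreducible hβQ
    have hminr : minpoly ℚ_[p] r = g :=
      (minpoly.eq_of_irreducible_of_monic hirr haev hgmonic).symm
    have h1 := norm_coeff_zero p L r
    rw [hminr] at h1
    rw [h1]
    refine pow_lt_one₀ (norm_nonneg _) hb0 ?_
    have : 0 < finrank ℚ_[p]⟮r⟯ L := finrank_pos
    omega
  -- Vieta
  intro i hi
  have hdeg : gL.natDegree = g.natDegree := hgmonic.natDegree_map _
  have hiL : i ≤ gL.natDegree := by omega
  have hvieta := Polynomial.coeff_eq_esymm_roots_of_card hcard hiL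
  have hcoeff : gL.coeff i = algebraMap ℚ_[p] L (g.coeff i) := by rw [hgL, coeff_map]
  -- norm of the esymm is small
  have hesymm : ‖Algebra.norm ℚ_[p] (gL.roots.esymm (gL.natDegree - i))‖ < 1 := by
    rw [Multiset.esymm]
    refine norm_multiset_sum_lt_one p _ ?_
    intro z hz
    obtain ⟨t, ht, rfl⟩ := Multiset.mem_map.mp hz
    rw [Multiset.mem_powersetCard] at ht
    refine norm_multiset_prod_lt_one p t ?_ fun z hz => hroot z (Multiset.mem_of_le ht.1 hz)
    intro h0
    rw [h0, Multiset.card_zero] at ht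
    omega
  -- put it together
  have hnorm : ‖Algebra.norm ℚ_[p] (algebraMap ℚ_[p] L (g.coeff i))‖ < 1 := by
    rw [← hcoeff, hvieta, hgLmonic.leadingCoeff, one_mul, map_mul, norm_mul]
    have hsign : ‖Algebra.norm ℚ_[p] ((-1 : L) ^ (gL.natDegree - i))‖ = 1 := by
      have hm1 : ((-1 : L)) = algebraMap ℚ_[p] L (-1) := by simp
      rw [map_pow, norm_pow, hm1, Algebra.norm_algebraMap]
      rw [norm_pow, norm_neg, norm_one, one_pow, one_pow]
    rw [hsign, one_mul]
    exact hesymm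
  rw [Algebra.norm_algebraMap, norm_pow] at hnorm
  by_contra hc
  push_neg at hc
  exact absurd hnorm (not_lt.mpr (one_le_pow₀ hc))

end Aux


theorem charpoly_blockDiagonal {R : Type*} [CommRing R] {m o : Type*} [DecidableEq m] [Fintype m]
    [DecidableEq o] [Fintype o] (M : Matrix m m R) :
    (Matrix.blockDiagonal fun _ : o => M).charpoly = M.charpoly ^ Fintype.card o := by
  have h : Matrix.charmatrix (Matrix.blockDiagonal fun _ : o => M)
      = Matrix.blockDiagonal fun _ : o => Matrix.charmatrix M := by
    ext ⟨i, k⟩ ⟨j, l⟩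
    rcases eq_or_ne k l with rfl | hkl
    · rw [Matrix.blockDiagonal_apply_eq]
      rcases eq_or_ne i j with rfl | hij
      · rw [Matrix.charmatrix_apply_eq, Matrix.charmatrix_apply_eq, Matrix.blockDiagonal_apply_eq]
      · rw [Matrix.charmatrix_apply_ne _ _ _ hij, Matrix.charmatrix_apply_ne _ _ _ (by simpa using hij)]
        rw [Matrix.blockDiagonal_apply_eq]
    · have hne : (i, k) ≠ (j, l) := fun hc => hkl (congrArg Prod.snd hc)
      rw [Matrix.charmatrix_apply_ne _ _ _ hne, Matrix.blockDiagonal_apply_ne _ _ _ hkl,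
        Matrix.blockDiagonal_apply_ne _ _ _ hkl, map_zero, neg_zero]
  rw [Matrix.charpoly, h, Matrix.det_blockDiagonal, Finset.prod_const, Matrix.charpoly,
    Finset.card_univ]

theorem charpoly_mulLeft {F E : Type*} [Field F] [Field E] [Algebra F E]
    [FiniteDimensional F E] (x : E) :
    (LinearMap.mulLeft F x).charpoly = minpoly F x ^ finrank F⟮x⟯ E := by
  classical
  have hx : IsIntegral F x := Algebra.IsIntegral.isIntegral x
  set pb := IntermediateField.adjoin.powerBasis hx with hpb
  set c : Basis (Fin (finrank F⟮x⟯ E)) F⟮x⟯ E := Module.finBasis F⟮x⟯ E with hc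
  set B := pb.basis.smulTower c with hB
  have h1 : (LinearMap.mulLeft F x).charpoly = (Algebra.leftMulMatrix B x).charpoly := by
    rw [← LinearMap.charpoly_toMatrix (LinearMap.mulLeft F x) B]
    rfl
  rw [h1]
  have h2 : x = algebraMap F⟮x⟯ E pb.gen := by
    rw [hpb]
    exact (IntermediateField.AdjoinSimple.algebraMap_gen F x).symm
  have h3 : (Algebra.leftMulMatrix B) x = Algebra.leftMulMatrix B (algebraMap F⟮x⟯ E pb.gen) := by
    rw [← h2]
  rw [h3, Algebra.smulTower_leftMulMatrix_algebraMap, charpoly_blockDiagonal,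
    charpoly_leftMulMatrix, Fintype.card_fin]
  congr 1
  rw [hpb]
  exact IntermediateField.minpoly_gen F x

section Main

open Polynomial

/-- Let `K` be a finite extension of `ℚ_p` of degree `d` and `α ∈ K` not integral
over `ℤ_p`. Then `β = α⁻¹` is integral over `ℤ_p`, and the characteristic polynomial
`a_d x^d + ⋯ + a_0 ∈ ℤ_p[x]` of multiplication by `β` on `K` satisfies `a_d = 1` and
`a_i ∈ pℤ_p` (equivalently `‖a_i‖ < 1`) for all `i < d`. -/
theorem charpoly_of_nonintegral_inverse (p : ℕ) [Fact p.Prime]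
    (K : Type*) [Field K] [Algebra ℚ_[p] K] [FiniteDimensional ℚ_[p] K]
    [Algebra ℤ_[p] K] [IsScalarTower ℤ_[p] ℚ_[p] K]
    (d : ℕ) (hd : d = Module.finrank ℚ_[p] K)
    (α : K) (hα : ¬ IsIntegral ℤ_[p] α) :
    IsIntegral ℤ_[p] (α⁻¹) ∧
      (LinearMap.mulLeft ℚ_[p] (α⁻¹)).charpoly.coeff d = 1 ∧
      ∀ i < d, ∃ a : ℤ_[p], (LinearMap.mulLeft ℚ_[p] (α⁻¹)).charpoly.coeff i = (a : ℚ_[p])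
        ∧ a ∈ Ideal.span {(p : ℤ_[p])} := by
  classical
  have hα0 : α ≠ 0 := fun h => hα (h ▸ isIntegral_zero)
  set β := α⁻¹ with hβdef
  -- Part 1 : β is integral
  have hνα : ¬ ‖Algebra.norm ℚ_[p] α‖ ≤ 1 :=
    fun h => hα (isIntegral_of_norm_le_one p K α h)
  push_neg at hνα
  have hprod : Algebra.norm ℚ_[p] α * Algebra.norm ℚ_[p] β = 1 := by
    rw [← map_mul, hβdef, mul_inv_cancel₀ hα0, map_one]
  have hνβ : ‖Algebra.norm ℚ_[p] β‖ < 1 := by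
    have h2 := congrArg (fun z => ‖z‖) hprod
    simp only [norm_mul, norm_one] at h2
    nlinarith [norm_nonneg (Algebra.norm ℚ_[p] β)]
  have hint : IsIntegral ℤ_[p] β := isIntegral_of_norm_le_one p K β hνβ.le
  refine ⟨hint, ?_, ?_⟩
  · -- leading coefficient
    have h1 : (LinearMap.mulLeft ℚ_[p] β).charpoly.Monic := LinearMap.charpoly_monic _
    have h2 : (LinearMap.mulLeft ℚ_[p] β).charpoly.natDegree = d := by
      rw [LinearMap.charpoly_natDegree, hd]
    rw [← h2]
    exact h1.coeff_natDegree
  · -- lower coefficients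
    intro i hi
    set g' : ℤ_[p][X] := minpoly ℤ_[p] β with hg'
    have hg'monic : g'.Monic := minpoly.monic hint
    set n := g'.natDegree with hn
    set e := finrank ℚ_[p]⟮β⟯ K with he
    have hmap : minpoly ℚ_[p] β = g'.map (algebraMap ℤ_[p] ℚ_[p]) :=
      minpoly.isIntegrallyClosed_eq_field_fractions' ℚ_[p] hint
    have hch : (LinearMap.mulLeft ℚ_[p] β).charpoly
        = (g' ^ e).map (algebraMap ℤ_[p] ℚ_[p]) := by
      rw [charpoly_mulLeft, hmap, Polynomial.map_pow]
    -- degrees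
    have hne : (minpoly ℚ_[p] β).natDegree = n := by
      rw [hmap]
      exact hg'monic.natDegree_map _
    have hdeg : d = e * n := by
      have h3 := LinearMap.charpoly_natDegree (R := ℚ_[p]) (M := K)
        (f := LinearMap.mulLeft ℚ_[p] β)
      rw [hch] at h3
      have h4 : ((g' ^ e).map (algebraMap ℤ_[p] ℚ_[p])).natDegree = e * n := by
        rw [(hg'monic.pow e).natDegree_map, hg'monic.natDegree_pow]
      rw [h4] at h3
      rw [hd, ← h3]
    -- small coefficients of g'
    have hsmallQ := minpoly_coeff_small p β hint hνβ
    have hsmall : ∀ j < n, g'.coeff j ∈ Ideal.span {(p : ℤ_[p])} := by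
      intro j hj
      rw [Ideal.mem_span_singleton, ← PadicInt.norm_lt_one_iff_dvd]
      have h5 := hsmallQ j (by rw [hne]; exact hj)
      rw [hmap, coeff_map, PadicInt.algebraMap_apply] at h5
      rwa [PadicInt.norm_def]
    -- reduction mod p of g' is X ^ n
    have hred : g'.map (PadicInt.toZMod (p := p)) = X ^ n := by
      ext j
      rw [coeff_map, coeff_X_pow]
      rcases lt_trichotomy j n with hj | rfl | hj
      · rw [if_neg hj.ne]
        have h6 := hsmall j hj
        rw [← PadicInt.maximalIdeal_eq_span_p, ← PadicInt.ker_toZMod,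
          RingHom.mem_ker] at h6
        exact h6
      · rw [if_pos rfl, hg'monic.coeff_natDegree, map_one]
      · rw [if_neg hj.ne', Polynomial.coeff_eq_zero_of_natDegree_lt hj, map_zero]
    -- conclude
    refine ⟨(g' ^ e).coeff i, ?_, ?_⟩
    · rw [hch, coeff_map, PadicInt.algebraMap_apply]
    · have h7 : (g' ^ e).map (PadicInt.toZMod (p := p)) = X ^ d := by
        rw [Polynomial.map_pow, hred, ← pow_mul, mul_comm n e, ← hdeg]
      have h8 : PadicInt.toZMod ((g' ^ e).coeff i) = 0 := by
        have := congrArg (fun q => Polynomial.coeff q i) h7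
        simp only [coeff_map, coeff_X_pow] at this
        rwa [if_neg hi.ne] at this
      rw [← PadicInt.maximalIdeal_eq_span_p, ← PadicInt.ker_toZMod]
      exact h8

end Main
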